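/- There exists t* > 0 such that θ_L is strictly increasing on [t*, ∞) and θ_L(t) → ∞ as t → ∞; consequently, for every integer v with vπ > θ_L(t*) there is a unique t > t* with θ_L(t) = vπ. -/

import Mathlib

open Complex Filter Set Topology

/-- The factor `Δ_L(s) = i^k (2π)^(2s-k) Γ(k-s)/Γ(s)` from the functional equation. -/
noncomputable def DeltaL (k : ℕ) (s : ℂ) : ℂ :=
  Complex.I ^ k * (2 * Real.pi : ℂ) ^ (2 * s - (k : ℂ)) *
    Complex.Gamma ((k : ℂ) - s) / Complex.Gamma s


namespace GramAux

/-- logarithm of the Gamma approximating sequence. -/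
noncomputable def Lfn (n : ℕ) (s : ℂ) : ℂ :=
  (Real.log (Nat.factorial n) : ℂ) + s * (Real.log n : ℂ)
    - ∑ j ∈ Finset.range (n + 1), Complex.log (s + j)

lemma add_nat_ne_zero {s : ℂ} (hs : 0 < s.re) (j : ℕ) : s + (j : ℂ) ≠ 0 := by
  intro h
  have : (s + (j : ℂ)).re = 0 := by rw [h]; simp
  simp only [Complex.add_re, Complex.natCast_re] at this
  have : (0:ℝ) ≤ (j:ℝ) := j.cast_nonneg
  linarith [hs]

lemma add_nat_mem_slitPlane {s : ℂ} (hs : 0 < s.re) (j : ℕ) :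
    s + (j : ℂ) ∈ Complex.slitPlane := by
  rw [Complex.mem_slitPlane_iff]
  left
  simp only [Complex.add_re, Complex.natCast_re]
  have : (0:ℝ) ≤ (j:ℝ) := j.cast_nonneg
  linarith

lemma exp_Lfn {n : ℕ} (hn : 1 ≤ n) {s : ℂ} (hs : 0 < s.re) :
    Complex.exp (Lfn n s) = Complex.GammaSeq s n := by
  have h1 : Complex.exp ((Real.log (Nat.factorial n) : ℂ)) = (Nat.factorial n : ℂ) := by
    rw [← Complex.ofReal_exp, Real.exp_log (by positivity)]
    push_cast; ring
  have h2 : Complex.exp (s * (Real.log n : ℂ)) = (n : ℂ) ^ s := by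
    rw [Complex.cpow_def_of_ne_zero (by exact_mod_cast (by omega : n ≠ 0))]
    rw [show ((n:ℂ)) = (((n:ℝ)):ℂ) by push_cast; ring,
      ← Complex.ofReal_log (by positivity : (0:ℝ) ≤ (n:ℝ))]
    ring_nf
  have h3 : Complex.exp (∑ j ∈ Finset.range (n + 1), Complex.log (s + j)) =
      ∏ j ∈ Finset.range (n + 1), (s + j) := by
    rw [Complex.exp_sum]
    exact Finset.prod_congr rfl fun j _ => Complex.exp_log (add_nat_ne_zero hs j)
  rw [Lfn, Complex.exp_sub, Complex.exp_add, h1, h2, h3, Complex.GammaSeq]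
  ring

lemma hasDerivAt_Lfn (n : ℕ) {s : ℂ} (hs : 0 < s.re) :
    HasDerivAt (Lfn n)
      ((Real.log n : ℂ) - ∑ j ∈ Finset.range (n + 1), (s + j)⁻¹) s := by
  have h1 : HasDerivAt (fun z : ℂ => (Real.log (Nat.factorial n) : ℂ) + z * (Real.log n : ℂ))
      (Real.log n : ℂ) s := by
    simpa using (hasDerivAt_mul_const ((Real.log n : ℂ))).const_add
      ((Real.log (Nat.factorial n) : ℂ)) (x := s)
  have h2 : HasDerivAt (fun z : ℂ => ∑ j ∈ Finset.range (n + 1), Complex.log (z + j))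
      (∑ j ∈ Finset.range (n + 1), (s + j)⁻¹) s := by
    apply HasDerivAt.fun_sum
    intro j _
    have := (((hasDerivAt_id s).add_const (j : ℂ)).clog (add_nat_mem_slitPlane hs j))
    simpa [one_div] using this
  exact h1.sub h2

end GramAux

namespace GramAuxB

/-- the increment in the telescoping series -/
noncomputable def dfn (n : ℕ) (s : ℂ) : ℂ :=
  s * (Real.log ((n + 1) / n) : ℂ) - Complex.log (1 + s / (n + 1))

lemma one_add_div_ne_zero {s : ℂ} (hs : 0 < s.re) (n : ℕ) :
    1 + s / ((n : ℂ) + 1) ≠ 0 := by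
  have h : (1 + s / ((n : ℂ) + 1)).re = 1 + s.re / ((n : ℝ) + 1) := by
    rw [show ((n : ℂ) + 1) = (((n : ℝ) + 1 : ℝ) : ℂ) by push_cast; ring,
      div_eq_mul_inv, ← Complex.ofReal_inv, mul_comm]
    simp only [Complex.add_re, Complex.one_re, Complex.re_ofReal_mul]
    rw [div_eq_mul_inv]
    ring
  intro hz
  rw [hz] at h
  simp only [Complex.zero_re] at h
  have h1 : (0:ℝ) < s.re / ((n : ℝ) + 1) := by positivity
  linarith

lemma Lfn_step {n : ℕ} (hn : 1 ≤ n) {s : ℂ} (hs : 0 < s.re) :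
    GramAux.Lfn (n + 1) s = GramAux.Lfn n s + dfn n s := by
  have hn0 : (0:ℝ) < (n:ℝ) := by exact_mod_cast hn
  have hfac : Real.log (Nat.factorial (n+1)) = Real.log ((n:ℝ)+1) + Real.log (Nat.factorial n) := by
    rw [Nat.factorial_succ]
    push_cast
    rw [Real.log_mul (by positivity) (by positivity)]
  have hlogdiv : Real.log (((n:ℝ) + 1) / n) = Real.log ((n:ℝ)+1) - Real.log n :=
    Real.log_div (by positivity) (by positivity)
  have hsplit : Complex.log (s + ((n:ℕ)+1 : ℕ)) =
      (Real.log ((n:ℝ)+1) : ℂ) + Complex.log (1 + s / ((n:ℂ) + 1)) := by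
    have hmul : s + (((n:ℕ)+1 : ℕ) : ℂ) = (((n:ℝ)+1 : ℝ) : ℂ) * (1 + s / ((n:ℂ)+1)) := by
      have hne : ((n:ℂ) + 1) ≠ 0 := by
        intro h
        have := congrArg Complex.re h
        simp at this
        linarith
      field_simp
      push_cast
      ring
    rw [hmul, Complex.log_ofReal_mul (by positivity) (one_add_div_ne_zero hs n)]
  simp only [GramAux.Lfn, dfn, Finset.sum_range_succ]
  rw [hfac, hsplit]
  have : (Real.log (((n:ℝ)+1)/n) : ℂ) = (Real.log ((n:ℝ)+1) : ℂ) - (Real.log (n:ℝ) : ℂ) := by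
    rw [hlogdiv]; push_cast; ring
  push_cast [this] at *
  ring

lemma dfn_bound {R : ℝ} (hR : 1 ≤ R) {n : ℕ} (hn : 2 * R ≤ n) {s : ℂ}
    (hs : 0 < s.re) (hsR : ‖s‖ ≤ R) : ‖dfn n s‖ ≤ (R + R ^ 2) / n ^ 2 := by
  have hn0 : (0:ℝ) < (n:ℝ) := by nlinarith
  have hn1 : (1:ℝ) ≤ (n:ℝ) := by nlinarith
  -- real log bounds : 1/(n+1) ≤ log((n+1)/n) ≤ 1/n
  have hlog_ub : Real.log (((n:ℝ)+1)/n) ≤ 1/(n:ℝ) := by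
    have := Real.log_le_sub_one_of_pos (show (0:ℝ) < ((n:ℝ)+1)/n by positivity)
    have h2 : ((n:ℝ)+1)/n - 1 = 1/n := by field_simp; ring
    linarith
  have hlog_lb : 1/((n:ℝ)+1) ≤ Real.log (((n:ℝ)+1)/n) := by
    have h1 : Real.log ((n:ℝ)/((n:ℝ)+1)) ≤ (n:ℝ)/((n:ℝ)+1) - 1 :=
      Real.log_le_sub_one_of_pos (by positivity)
    have h2 : Real.log ((n:ℝ)/((n:ℝ)+1)) = - Real.log (((n:ℝ)+1)/n) := by
      rw [← Real.log_inv]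
      congr 1
      field_simp
    have h3 : (n:ℝ)/((n:ℝ)+1) - 1 = -(1/((n:ℝ)+1)) := by field_simp; ring
    rw [h2, h3] at h1
    linarith
  -- rewrite dfn as sum of two small terms
  have hz : ‖s / ((n:ℂ)+1)‖ ≤ R / ((n:ℝ)+1) := by
    rw [norm_div]
    have : ‖(n:ℂ)+1‖ = (n:ℝ)+1 := by
      rw [show ((n:ℂ)+1) = (((n:ℝ)+1 : ℝ):ℂ) by push_cast; ring]
      rw [Complex.norm_real, Real.norm_eq_abs, abs_of_pos (by positivity)]
    rw [this]
    gcongr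
  have hzhalf : ‖s / ((n:ℂ)+1)‖ ≤ 1/2 := by
    refine hz.trans ?_
    rw [div_le_iff₀ (by positivity)]
    nlinarith
  have key : dfn n s = s * ((Real.log (((n:ℝ)+1)/n) : ℂ) - 1/((n:ℂ)+1))
      + (s/((n:ℂ)+1) - Complex.log (1 + s/((n:ℂ)+1))) := by
    simp only [dfn]
    push_cast
    ring
  rw [key]
  have b1 : ‖s * ((Real.log (((n:ℝ)+1)/n) : ℂ) - 1/((n:ℂ)+1))‖ ≤ R / n^2 := by
    rw [norm_mul]
    have h4 : ((Real.log (((n:ℝ)+1)/n) : ℂ) - 1/((n:ℂ)+1)) =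
        ((Real.log (((n:ℝ)+1)/n) - 1/((n:ℝ)+1) : ℝ) : ℂ) := by push_cast; ring
    rw [h4, Complex.norm_real, Real.norm_eq_abs, _root_.abs_of_nonneg (by linarith)]
    have h5 : Real.log (((n:ℝ)+1)/n) - 1/((n:ℝ)+1) ≤ 1/(n:ℝ)^2 := by
      have : 1/(n:ℝ) - 1/((n:ℝ)+1) ≤ 1/(n:ℝ)^2 := by
        rw [div_sub_div _ _ (by positivity) (by positivity)]
        rw [div_le_div_iff₀ (by positivity) (by positivity)]
        nlinarith
      linarith
    calc ‖s‖ * (Real.log (((n:ℝ)+1)/n) - 1/((n:ℝ)+1)) ≤ R * (1/(n:ℝ)^2) := by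
          apply mul_le_mul hsR h5 (by linarith) (by linarith)
      _ = R / n^2 := by ring
  have b2 : ‖s/((n:ℂ)+1) - Complex.log (1 + s/((n:ℂ)+1))‖ ≤ R^2 / n^2 := by
    have h6 := Complex.norm_log_one_add_sub_self_le (z := s/((n:ℂ)+1))
      (lt_of_le_of_lt hzhalf (by norm_num))
    rw [← norm_neg, neg_sub]
    refine h6.trans ?_
    have h7 : (1 - ‖s/((n:ℂ)+1)‖)⁻¹ ≤ 2 := by
      rw [inv_le_comm₀ (by linarith [hzhalf]) (by norm_num)]
      linarith
    have e1 : ‖s/((n:ℂ)+1)‖^2 ≤ (R/((n:ℝ)+1))^2 :=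
      pow_le_pow_left₀ (norm_nonneg _) hz 2
    calc ‖s/((n:ℂ)+1)‖^2 * (1-‖s/((n:ℂ)+1)‖)⁻¹ / 2 ≤ (R/((n:ℝ)+1))^2 * 2 / 2 := by
          apply div_le_div_of_nonneg_right ?_ (by norm_num)
          exact mul_le_mul e1 h7 (inv_nonneg.mpr (by linarith)) (by positivity)
      _ = R^2/((n:ℝ)+1)^2 := by rw [div_pow]; ring
      _ ≤ R^2/n^2 := by
          gcongr <;> nlinarith
  calc ‖_ + _‖ ≤ R/n^2 + R^2/n^2 := norm_add_le_of_le b1 b2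
    _ = (R + R^2)/n^2 := by ring

end GramAuxB
namespace GramAuxC
open GramAux GramAuxB

lemma isOpen_Omega : IsOpen {s : ℂ | 0 < s.re} := isOpen_lt continuous_const Complex.continuous_re

lemma tluo : TendstoLocallyUniformlyOn (fun (n : ℕ) (s : ℂ) => Complex.exp (GramAux.Lfn n s))
    Complex.Gamma atTop {s : ℂ | 0 < s.re} := by
  rw [tendstoLocallyUniformlyOn_iff_forall_isCompact isOpen_Omega]
  intro K hK hKc
  -- bound on K
  obtain ⟨R₀, hR₀⟩ := hKc.isBounded.subset_closedBall 0
  set R : ℝ := max R₀ 1 with hRdef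
  have hR1 : 1 ≤ R := le_max_right _ _
  have hRb : ∀ s ∈ K, ‖s‖ ≤ R := fun s hs =>
    le_trans (by simpa using mem_closedBall_zero_iff.mp (hR₀ hs)) (le_max_left _ _)
  set N : ℕ := ⌈2 * R⌉₊ with hNdef
  have hN2R : 2 * R ≤ N := Nat.le_ceil _
  have hN1 : 1 ≤ N := Nat.one_le_ceil_iff.mpr (by linarith)
  -- summable bound
  set u : ℕ → ℝ := fun i => (R + R ^ 2) / ((N + i : ℕ) : ℝ) ^ 2 with hudef
  have hu : Summable u := by
    have h1 : Summable (fun i : ℕ => 1 / ((i : ℝ)) ^ 2) :=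
      Real.summable_one_div_nat_pow.mpr one_lt_two
    have h2 : Summable (fun i : ℕ => 1 / (((i + N : ℕ)) : ℝ) ^ 2) :=
      (summable_nat_add_iff (f := fun i : ℕ => 1 / (i:ℝ)^2) N).mpr h1
    have h3 := h2.mul_left (R + R ^ 2)
    refine h3.congr fun i => ?_
    simp only [hudef]
    rw [show (i + N) = (N + i) by omega]
    ring
  have hbound : ∀ i : ℕ, ∀ s ∈ K, ‖dfn (N + i) s‖ ≤ u i := by
    intro i s hs
    refine GramAuxB.dfn_bound hR1 ?_ (hK hs) (hRb s hs)
    calc 2 * R ≤ (N : ℝ) := hN2R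
      _ ≤ ((N + i : ℕ) : ℝ) := by exact_mod_cast Nat.le_add_right N i
  have htsum := tendstoUniformlyOn_tsum_nat hu hbound (s := K)
  -- representation of Lfn
  have hrepr : ∀ m : ℕ, ∀ s ∈ K, GramAux.Lfn (N + m) s =
      GramAux.Lfn N s + ∑ i ∈ Finset.range m, dfn (N + i) s := by
    intro m
    induction m with
    | zero => intro s _; simp
    | succ m ih =>
      intro s hs
      rw [show N + (m + 1) = (N + m) + 1 by omega,
        GramAuxB.Lfn_step (by omega) (hK hs), ih s hs, Finset.sum_range_succ]
      ring
  -- uniform convergence of Lfn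
  have hL : TendstoUniformlyOn (fun n s => GramAux.Lfn n s)
      (fun s => GramAux.Lfn N s + ∑' i, dfn (N + i) s) atTop K := by
    rw [Metric.tendstoUniformlyOn_iff] at htsum ⊢
    intro ε hε
    obtain ⟨m₀, hm₀⟩ := eventually_atTop.mp (htsum ε hε)
    rw [eventually_atTop]
    refine ⟨N + m₀, fun n hn s hs => ?_⟩
    have h : GramAux.Lfn n s = GramAux.Lfn N s + ∑ i ∈ Finset.range (n - N), dfn (N + i) s := by
      rw [← hrepr (n - N) s hs]
      congr 1
      omega
    rw [h, dist_add_left]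
    exact hm₀ (n - N) (by omega) s hs
  -- continuity and bound for the limit
  have hcont : ∀ n : ℕ, ContinuousOn (fun s => GramAux.Lfn n s) K := fun n s hs =>
    ((GramAux.hasDerivAt_Lfn n (hK hs)).differentiableAt.continuousAt).continuousWithinAt
  have hLcont : ContinuousOn (fun s => GramAux.Lfn N s + ∑' i, dfn (N + i) s) K :=
    hL.continuousOn (Eventually.of_forall hcont).frequently
  obtain ⟨M, hM⟩ := hKc.exists_bound_of_continuousOn
    (Complex.continuous_exp.comp_continuousOn hLcont)
  set M' : ℝ := max M 0 with hM'def
  have hM'0 : 0 ≤ M' := le_max_right _ _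
  have hM' : ∀ s ∈ K, ‖Complex.exp (GramAux.Lfn N s + ∑' i, dfn (N + i) s)‖ ≤ M' :=
    fun s hs => le_trans (hM s hs) (le_max_left _ _)
  -- uniform convergence of exp ∘ Lfn
  have hexp : TendstoUniformlyOn (fun n s => Complex.exp (GramAux.Lfn n s))
      (fun s => Complex.exp (GramAux.Lfn N s + ∑' i, dfn (N + i) s)) atTop K := by
    rw [Metric.tendstoUniformlyOn_iff] at hL ⊢
    intro ε hε
    set δ : ℝ := min 1 (ε / (2 * M' + 2)) with hδdef
    have hδpos : 0 < δ := lt_min one_pos (by positivity)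
    filter_upwards [hL δ hδpos] with n hn s hs
    set A := GramAux.Lfn N s + ∑' i, dfn (N + i) s with hAdef
    have h1 : ‖GramAux.Lfn n s - A‖ < δ := by
      have := hn s hs
      rwa [dist_comm, dist_eq_norm] at this
    have hfac : Complex.exp (GramAux.Lfn n s) - Complex.exp A =
        Complex.exp A * (Complex.exp (GramAux.Lfn n s - A) - 1) := by
      rw [mul_sub, mul_one, ← Complex.exp_add]
      congr 2
      ring
    have h2 : ‖Complex.exp (GramAux.Lfn n s - A) - 1‖ ≤ 2 * ‖GramAux.Lfn n s - A‖ := by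
      have := Complex.norm_exp_sub_one_le (x := GramAux.Lfn n s - A)
        (le_of_lt (lt_of_lt_of_le h1 (min_le_left _ _)))
      simpa using this
    have h3 : dist (Complex.exp A) (Complex.exp (GramAux.Lfn n s)) ≤ M' * (2 * δ) := by
      rw [dist_comm, dist_eq_norm, hfac, norm_mul]
      have := hM' s hs
      calc ‖Complex.exp A‖ * ‖Complex.exp (GramAux.Lfn n s - A) - 1‖
          ≤ M' * (2 * ‖GramAux.Lfn n s - A‖) := by
            apply mul_le_mul (by simpa only [hAdef] using this) h2 (norm_nonneg _) hM'0
        _ ≤ M' * (2 * δ) := by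
            apply mul_le_mul_of_nonneg_left _ hM'0
            linarith
    refine lt_of_le_of_lt h3 ?_
    have hδ2 : δ ≤ ε / (2 * M' + 2) := min_le_right _ _
    have hεeq : (2 * M' + 2) * (ε / (2 * M' + 2)) = ε := by field_simp
    calc M' * (2 * δ) ≤ M' * (2 * (ε / (2 * M' + 2))) := by
          apply mul_le_mul_of_nonneg_left _ hM'0
          linarith
      _ = (2 * M' + 2) * (ε / (2 * M' + 2)) - 2 * (ε / (2 * M' + 2)) := by ring
      _ = ε - 2 * (ε / (2 * M' + 2)) := by rw [hεeq]
      _ < ε := by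
          have : 0 < ε / (2 * M' + 2) := by positivity
          linarith
  -- identify the limit with Gamma
  refine hexp.congr_right fun s hs => ?_
  have h1 : Tendsto (fun n => Complex.exp (GramAux.Lfn n s)) atTop
      (𝓝 (Complex.exp (GramAux.Lfn N s + ∑' i, dfn (N + i) s))) := hexp.tendsto_at hs
  have h2 : Tendsto (fun n => Complex.exp (GramAux.Lfn n s)) atTop (𝓝 (Complex.Gamma s)) := by
    apply (Complex.GammaSeq_tendsto_Gamma s).congr'
    filter_upwards [eventually_ge_atTop 1] with n hn
    exact (GramAux.exp_Lfn hn (hK hs)).symm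
  exact tendsto_nhds_unique h1 h2

lemma tendsto_digamma {x : ℂ} (hx : 0 < x.re) :
    Tendsto (fun n : ℕ => (Real.log n : ℂ) - ∑ j ∈ Finset.range (n + 1), (x + j)⁻¹) atTop
      (𝓝 (logDeriv Complex.Gamma x)) := by
  have hne : ∀ m : ℕ, x ≠ -m := by
    intro m h
    have : x.re = -(m : ℝ) := by rw [h]; simp
    have h2 : (0:ℝ) ≤ (m:ℝ) := m.cast_nonneg
    linarith
  have h := Complex.logDeriv_tendsto (f := fun n s => Complex.exp (GramAux.Lfn n s)) (g := Complex.Gamma)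
    isOpen_Omega (show x ∈ {s : ℂ | 0 < s.re} from hx) tluo
    (Eventually.of_forall fun n s hs =>
      ((GramAux.hasDerivAt_Lfn n hs).cexp.differentiableAt.differentiableWithinAt))
    (Complex.Gamma_ne_zero hne)
  refine Tendsto.congr (fun n => ?_) h
  have hd := (GramAux.hasDerivAt_Lfn n hx).cexp
  show logDeriv (fun s => Complex.exp (GramAux.Lfn n s)) x = _
  rw [logDeriv_apply, hd.deriv, mul_comm, mul_div_assoc, div_self (Complex.exp_ne_zero _),
    mul_one]

end GramAuxC
namespace GramAuxD

/-- real part of the digamma function along a vertical line -/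
noncomputable def psire (σ : ℝ) (t : ℝ) : ℝ :=
  (logDeriv Complex.Gamma ((σ : ℂ) + t * Complex.I)).re

lemma re_inv_eq (σ t : ℝ) (j : ℕ) :
    ((((σ:ℂ) + t * Complex.I) + j)⁻¹).re = (σ + j) / ((σ + j) ^ 2 + t ^ 2) := by
  rw [Complex.inv_re, Complex.normSq_apply]
  have h1 : (((σ:ℂ) + t * Complex.I) + j).re = σ + j := by simp
  have h2 : (((σ:ℂ) + t * Complex.I) + j).im = t := by simp
  rw [h1, h2]
  ring_nf

lemma tendsto_psire (σ : ℝ) (hσ : 0 < σ) (t : ℝ) :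
    Tendsto (fun n : ℕ => Real.log n
        - ∑ j ∈ Finset.range (n + 1), (σ + j) / ((σ + j) ^ 2 + t ^ 2))
      atTop (𝓝 (psire σ t)) := by
  have hx : (0:ℝ) < ((σ:ℂ) + t * Complex.I).re := by simpa using hσ
  have h := GramAuxC.tendsto_digamma hx
  have h2 := (Complex.continuous_re.tendsto _).comp h
  refine Tendsto.congr (fun n => ?_) h2
  simp only [Function.comp_apply]
  rw [Complex.sub_re, Complex.ofReal_re, Complex.re_sum]
  congr 1
  exact Finset.sum_congr rfl fun j _ => re_inv_eq σ t j

lemma psire_even (σ : ℝ) (hσ : 0 < σ) (t : ℝ) : psire σ (-t) = psire σ t :=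
  tendsto_nhds_unique (by simpa [neg_sq] using tendsto_psire σ hσ (-t)) (tendsto_psire σ hσ t)

lemma psire_mono (σ : ℝ) (hσ : 0 < σ) {t₁ t₂ : ℝ} (h0 : 0 ≤ t₁) (h : t₁ ≤ t₂) :
    psire σ t₁ ≤ psire σ t₂ := by
  have hd := (tendsto_psire σ hσ t₂).sub (tendsto_psire σ hσ t₁)
  have hnonneg : ∀ n : ℕ,
      (0:ℝ) ≤ (Real.log n - ∑ j ∈ Finset.range (n + 1), (σ + j) / ((σ + j) ^ 2 + t₂ ^ 2))
        - (Real.log n - ∑ j ∈ Finset.range (n + 1), (σ + j) / ((σ + j) ^ 2 + t₁ ^ 2)) := by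
    intro n
    have : (Real.log n - ∑ j ∈ Finset.range (n + 1), (σ + j) / ((σ + j) ^ 2 + t₂ ^ 2))
        - (Real.log n - ∑ j ∈ Finset.range (n + 1), (σ + j) / ((σ + j) ^ 2 + t₁ ^ 2))
        = ∑ j ∈ Finset.range (n + 1),
            ((σ + j) / ((σ + j) ^ 2 + t₁ ^ 2) - (σ + j) / ((σ + j) ^ 2 + t₂ ^ 2)) := by
      rw [Finset.sum_sub_distrib]
      ring
    rw [this]
    apply Finset.sum_nonneg
    intro j _
    have hj : (0:ℝ) ≤ (j:ℝ) := j.cast_nonneg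
    rw [sub_nonneg]
    apply div_le_div_of_nonneg_left (by positivity) (by positivity)
    nlinarith
  have := ge_of_tendsto' hd hnonneg
  linarith

lemma psire_tendsto (σ : ℝ) (hσ : 0 < σ) : Tendsto (psire σ) atTop atTop := by
  rw [tendsto_atTop]
  intro M
  have hdiv : Tendsto (fun n : ℕ => ∑ j ∈ Finset.range n, 1 / (2 * (σ + 1)) * (1 / (j + 1 : ℝ)))
      atTop atTop := by
    have h1 := Tendsto.const_mul_atTop (show (0:ℝ) < 1 / (2 * (σ + 1)) by positivity)
      Real.tendsto_sum_range_one_div_nat_succ_atTop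
    refine h1.congr fun n => ?_
    rw [Finset.mul_sum]
  have hdiv2 : Tendsto (fun n : ℕ => ∑ j ∈ Finset.range n, 1 / (2 * (σ + (j:ℝ)))) atTop atTop := by
    apply tendsto_atTop_mono _ hdiv
    intro n
    apply Finset.sum_le_sum
    intro j _
    have hj : (0:ℝ) ≤ (j:ℝ) := j.cast_nonneg
    rw [div_mul_div_comm, one_mul]
    apply one_div_le_one_div_of_le (by positivity)
    nlinarith
  obtain ⟨m, hm⟩ := (hdiv2.eventually_ge_atTop (M - psire σ 0)).exists
  rw [eventually_atTop]
  refine ⟨σ + m, fun t ht => ?_⟩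
  have ht0 : 0 < t := lt_of_lt_of_le (by positivity) ht
  have hd := (tendsto_psire σ hσ t).sub (tendsto_psire σ hσ 0)
  have key : M - psire σ 0 ≤ psire σ t - psire σ 0 := by
    refine ge_of_tendsto hd ?_
    filter_upwards [eventually_ge_atTop m] with n hn
    have e1 : (Real.log n - ∑ j ∈ Finset.range (n + 1), (σ + j) / ((σ + j) ^ 2 + t ^ 2))
        - (Real.log n - ∑ j ∈ Finset.range (n + 1), (σ + j) / ((σ + j) ^ 2 + (0:ℝ) ^ 2))
        = ∑ j ∈ Finset.range (n + 1),
            ((σ + j) / ((σ + j) ^ 2 + (0:ℝ) ^ 2) - (σ + j) / ((σ + j) ^ 2 + t ^ 2)) := by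
      rw [Finset.sum_sub_distrib]
      ring
    rw [e1]
    have step1 : ∑ j ∈ Finset.range m,
        ((σ + j) / ((σ + j) ^ 2 + (0:ℝ) ^ 2) - (σ + j) / ((σ + j) ^ 2 + t ^ 2))
        ≤ ∑ j ∈ Finset.range (n + 1),
        ((σ + j) / ((σ + j) ^ 2 + (0:ℝ) ^ 2) - (σ + j) / ((σ + j) ^ 2 + t ^ 2)) := by
      apply Finset.sum_le_sum_of_subset_of_nonneg
      · exact Finset.range_subset_range.mpr (by omega)
      · intro j _ _
        have hj : (0:ℝ) ≤ (j:ℝ) := j.cast_nonneg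
        rw [sub_nonneg]
        apply div_le_div_of_nonneg_left (by positivity) (by positivity)
        nlinarith
    have step2 : ∑ j ∈ Finset.range m, 1 / (2 * (σ + (j:ℝ)))
        ≤ ∑ j ∈ Finset.range m,
          ((σ + j) / ((σ + j) ^ 2 + (0:ℝ) ^ 2) - (σ + j) / ((σ + j) ^ 2 + t ^ 2)) := by
      apply Finset.sum_le_sum
      intro j hj
      have hjm : (j:ℝ) ≤ (m:ℝ) := by
        have := Finset.mem_range.mp hj
        exact_mod_cast le_of_lt this
      have hj0 : (0:ℝ) ≤ (j:ℝ) := j.cast_nonneg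
      have hσj : 0 < σ + (j:ℝ) := by linarith
      have hjt : σ + (j:ℝ) ≤ t := by linarith
      have hc0 : (σ + (j:ℝ)) / ((σ + j) ^ 2 + (0:ℝ) ^ 2) = 1 / (σ + j) := by
        rw [zero_pow (by norm_num), add_zero, pow_two]
        rw [div_eq_div_iff (by positivity) (by positivity)]
        ring
      have hct : (σ + (j:ℝ)) / ((σ + j) ^ 2 + t ^ 2) ≤ 1 / (2 * (σ + j)) := by
        rw [div_le_div_iff₀ (by positivity) (by positivity)]
        nlinarith
      rw [hc0]
      have : 1 / (σ + (j:ℝ)) - 1 / (2 * (σ + j)) = 1 / (2 * (σ + (j:ℝ))) := by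
        field_simp
        ring
      linarith
    linarith
  linarith

end GramAuxD
namespace GramAuxE

lemma ne_neg_nat {z : ℂ} (hz : 0 < z.re) : ∀ m : ℕ, z ≠ -m := by
  intro m h
  have : z.re = -(m:ℝ) := by rw [h]; simp
  have h2 : (0:ℝ) ≤ (m:ℝ) := m.cast_nonneg
  linarith

lemma theta_hasDeriv (k : ℕ) (hk : 12 ≤ k)
    (logΔ : ℂ → ℂ)
    (hlog_diff : ∀ s : ℂ, 0 < s.re → s.re < (k : ℝ) → DifferentiableAt ℂ logΔ s)
    (hlog_exp : ∀ s : ℂ, 0 < s.re → s.re < (k : ℝ) → Complex.exp (logΔ s) = DeltaL k s)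
    (hΔ_ne : ∀ s : ℂ, 0 < s.re → s.re < (k : ℝ) → DeltaL k s ≠ 0)
    (θ : ℝ → ℝ)
    (hθ : ∀ t : ℝ, (θ t : ℂ) = Complex.I / 2 * logΔ ((k : ℂ) / 2 + t * Complex.I))
    (t : ℝ) :
    HasDerivAt θ (GramAuxD.psire ((k : ℝ) / 2) t - Real.log (2 * Real.pi)) t := by
  set σ : ℝ := (k : ℝ) / 2 with hσdef
  have hσ : 0 < σ := by
    have : (0:ℝ) < (k:ℝ) := by exact_mod_cast (by omega : 0 < k)
    simp only [hσdef]; linarith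
  set s : ℂ := (k : ℂ) / 2 + (t : ℂ) * Complex.I with hsdef
  have hs_eq : s = (σ : ℂ) + (t : ℂ) * Complex.I := by
    simp only [hsdef, hσdef]; push_cast; ring
  have hs_re : s.re = σ := by rw [hs_eq]; simp
  have h0 : 0 < s.re := by rw [hs_re]; exact hσ
  have hk' : s.re < (k : ℝ) := by
    rw [hs_re]
    have : (0:ℝ) < (k:ℝ) := by exact_mod_cast (by omega : 0 < k)
    simp only [hσdef]; linarith
  have hks_eq : (k : ℂ) - s = (σ : ℂ) + ((-t : ℝ) : ℂ) * Complex.I := by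
    rw [hs_eq]
    simp only [hσdef]
    push_cast
    ring
  have hks_re : ((k : ℂ) - s).re = σ := by rw [hks_eq]; simp
  have hks_pos : 0 < ((k : ℂ) - s).re := by rw [hks_re]; exact hσ
  -- Gamma facts
  have hΓs : DifferentiableAt ℂ Complex.Gamma s :=
    Complex.differentiableAt_Gamma s (ne_neg_nat h0)
  have hΓks : DifferentiableAt ℂ Complex.Gamma ((k : ℂ) - s) :=
    Complex.differentiableAt_Gamma _ (ne_neg_nat hks_pos)
  have hΓs_ne : Complex.Gamma s ≠ 0 := Complex.Gamma_ne_zero (ne_neg_nat h0)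
  have hΓks_ne : Complex.Gamma ((k : ℂ) - s) ≠ 0 := Complex.Gamma_ne_zero (ne_neg_nat hks_pos)
  -- derivative of DeltaL
  set A : ℂ := 2 * Complex.log (2 * Real.pi) - logDeriv Complex.Gamma ((k : ℂ) - s)
    - logDeriv Complex.Gamma s with hAdef
  have hbase : (2 * (Real.pi : ℂ)) ≠ 0 := by
    rw [show (2 * (Real.pi : ℂ)) = ((2 * Real.pi : ℝ) : ℂ) by push_cast; ring]
    exact_mod_cast (by positivity : (2 * Real.pi : ℝ) ≠ 0)
  have hcpow_ne : (2 * (Real.pi : ℂ)) ^ (2 * s - (k : ℂ)) ≠ 0 := by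
    rw [Complex.cpow_def_of_ne_zero hbase]
    exact Complex.exp_ne_zero _
  have hinner : HasDerivAt (fun z : ℂ => 2 * z - (k : ℂ)) 2 s := by
    simpa using ((hasDerivAt_id s).const_mul (2:ℂ)).sub_const (k : ℂ)
  have hg1 : HasDerivAt (fun z : ℂ => Complex.I ^ k * (2 * (Real.pi : ℂ)) ^ (2 * z - (k : ℂ)))
      (Complex.I ^ k * ((2 * (Real.pi : ℂ)) ^ (2 * s - (k : ℂ)) * Complex.log (2 * Real.pi) * 2))
      s := (hinner.const_cpow (Or.inl hbase)).const_mul _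
  have hg2 : HasDerivAt (fun z : ℂ => Complex.Gamma ((k : ℂ) - z))
      (deriv Complex.Gamma ((k : ℂ) - s) * (-1)) s := by
    have hsub : HasDerivAt (fun z : ℂ => (k : ℂ) - z) (-1) s := by
      simpa using (hasDerivAt_id s).const_sub (k : ℂ)
    exact HasDerivAt.comp s hΓks.hasDerivAt hsub
  have hnum := hg1.mul hg2
  have hΔder0 := hnum.div hΓs.hasDerivAt hΓs_ne
  have hΔder : HasDerivAt (DeltaL k) (DeltaL k s * A) s := by
    refine hΔder0.congr_deriv ?_
    simp only [hAdef, DeltaL, logDeriv_apply, Pi.mul_apply]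
    field_simp
    ring
  -- identify deriv logΔ with A
  have hlogd : HasDerivAt logΔ (deriv logΔ s) s := (hlog_diff s h0 hk').hasDerivAt
  have hopen : IsOpen {z : ℂ | 0 < z.re ∧ z.re < (k : ℝ)} := by
    have h1 : IsOpen {z : ℂ | 0 < z.re} := isOpen_lt continuous_const Complex.continuous_re
    have h2 : IsOpen {z : ℂ | z.re < (k : ℝ)} := isOpen_lt Complex.continuous_re continuous_const
    exact h1.inter h2
  have hEq : DeltaL k =ᶠ[𝓝 s] (fun z => Complex.exp (logΔ z)) := by
    refine Filter.eventually_of_mem (hopen.mem_nhds ⟨h0, hk'⟩) fun z hz => ?_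
    exact (hlog_exp z hz.1 hz.2).symm
  have hΔder2 : HasDerivAt (DeltaL k) (Complex.exp (logΔ s) * deriv logΔ s) s :=
    hlogd.cexp.congr_of_eventuallyEq hEq
  have huniq : Complex.exp (logΔ s) * deriv logΔ s = DeltaL k s * A := hΔder2.unique hΔder
  rw [hlog_exp s h0 hk'] at huniq
  have hA : deriv logΔ s = A := mul_left_cancel₀ (hΔ_ne s h0 hk') huniq
  -- derivative of θ
  have hinner2 : HasDerivAt (fun z : ℂ => (k : ℂ) / 2 + z * Complex.I) Complex.I ((t : ℝ) : ℂ) := by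
    simpa using ((hasDerivAt_id ((t : ℝ) : ℂ)).mul_const Complex.I).const_add ((k : ℂ) / 2)
  have hcomp : HasDerivAt (fun z : ℂ => logΔ ((k : ℂ) / 2 + z * Complex.I))
      (deriv logΔ s * Complex.I) ((t : ℝ) : ℂ) := HasDerivAt.comp _ hlogd hinner2
  have he : HasDerivAt (fun z : ℂ => Complex.I / 2 * logΔ ((k : ℂ) / 2 + z * Complex.I))
      (Complex.I / 2 * (deriv logΔ s * Complex.I)) ((t : ℝ) : ℂ) := hcomp.const_mul _
  have hre := he.real_of_complex
  have hθe : θ = fun x : ℝ =>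
      ((fun z : ℂ => Complex.I / 2 * logΔ ((k : ℂ) / 2 + z * Complex.I)) (x : ℂ)).re := by
    funext x
    calc θ x = ((θ x : ℝ) : ℂ).re := (Complex.ofReal_re _).symm
      _ = _ := by rw [hθ x]
  rw [hθe]
  refine hre.congr_deriv ?_
  rw [hA]
  have hmul : Complex.I / 2 * (A * Complex.I) = ((-(1:ℝ)/2 : ℝ) : ℂ) * A := by
    rw [show ((-(1:ℝ)/2 : ℝ) : ℂ) = -(1:ℂ)/2 by push_cast; ring]
    calc Complex.I / 2 * (A * Complex.I) = Complex.I * Complex.I * A / 2 := by ring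
      _ = -(1:ℂ)/2 * A := by rw [Complex.I_mul_I]; ring
  rw [hmul, Complex.re_ofReal_mul]
  have hAre : A.re = 2 * Real.log (2 * Real.pi) - 2 * GramAuxD.psire σ t := by
    simp only [hAdef, Complex.sub_re, Complex.mul_re]
    have hlog2pi : (Complex.log (2 * (Real.pi : ℂ))) = ((Real.log (2 * Real.pi) : ℝ) : ℂ) := by
      rw [show (2 * (Real.pi : ℂ)) = ((2 * Real.pi : ℝ) : ℂ) by push_cast; ring]
      exact (Complex.ofReal_log (by positivity)).symm
    have h1 : (logDeriv Complex.Gamma s).re = GramAuxD.psire σ t := by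
      rw [hs_eq]; rfl
    have h2 : (logDeriv Complex.Gamma ((k : ℂ) - s)).re = GramAuxD.psire σ t := by
      rw [hks_eq]
      show GramAuxD.psire σ (-t) = GramAuxD.psire σ t
      exact GramAuxD.psire_even σ hσ t
    rw [hlog2pi, h1, h2]
    simp
    ring
  rw [hAre]
  ring

end GramAuxE

/-- `θ_L` is eventually strictly increasing and tends to infinity; consequently the Gram
points are well defined. -/
theorem thetaL_eventually_strictMono_and_gram_points_exist
    (k : ℕ) (hk : 12 ≤ k) (hkeven : Even k)
    (logΔ : ℂ → ℂ)
    (hlog_diff : ∀ s : ℂ, 0 < s.re → s.re < (k : ℝ) → DifferentiableAt ℂ logΔ s)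
    (hlog_exp : ∀ s : ℂ, 0 < s.re → s.re < (k : ℝ) → Complex.exp (logΔ s) = DeltaL k s)
    (hΔ_ne : ∀ s : ℂ, 0 < s.re → s.re < (k : ℝ) → DeltaL k s ≠ 0)
    (hlog_val : logΔ ((k : ℂ) / 2) = (k : ℂ) * Real.pi * Complex.I / 2)
    (θ : ℝ → ℝ)
    (hθ : ∀ t : ℝ, (θ t : ℂ) = Complex.I / 2 * logΔ ((k : ℂ) / 2 + t * Complex.I))
    :
    ∃ tstar : ℝ, 0 < tstar ∧ StrictMonoOn θ (Set.Ici tstar) ∧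
      Filter.Tendsto θ Filter.atTop Filter.atTop ∧
      ∀ v : ℤ, θ tstar < (v : ℝ) * Real.pi →
        ∃! t : ℝ, tstar < t ∧ θ t = (v : ℝ) * Real.pi := by
  set σ : ℝ := (k : ℝ) / 2 with hσdef
  have hσ : 0 < σ := by
    have : (0:ℝ) < (k:ℝ) := by exact_mod_cast (by omega : 0 < k)
    simp only [hσdef]; linarith
  have hder : ∀ t : ℝ, HasDerivAt θ (GramAuxD.psire σ t - Real.log (2 * Real.pi)) t :=
    GramAuxE.theta_hasDeriv k hk logΔ hlog_diff hlog_exp hΔ_ne θ hθ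
  have hθdiff : Differentiable ℝ θ := fun t => (hder t).differentiableAt
  have hθcont : Continuous θ := hθdiff.continuous
  -- choose tstar
  obtain ⟨t₀, h1, h2⟩ := (((GramAuxD.psire_tendsto σ hσ).eventually_ge_atTop
    (Real.log (2 * Real.pi) + 1)).and (eventually_ge_atTop (1:ℝ))).exists
  have hpos : (0:ℝ) < t₀ := by linarith
  have hP : ∀ t : ℝ, t₀ ≤ t → 1 ≤ GramAuxD.psire σ t - Real.log (2 * Real.pi) := by
    intro t ht
    have := GramAuxD.psire_mono σ hσ (by linarith : (0:ℝ) ≤ t₀) ht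
    linarith
  have hderiv_eq : ∀ t : ℝ, deriv θ t = GramAuxD.psire σ t - Real.log (2 * Real.pi) :=
    fun t => (hder t).deriv
  have hmono : StrictMonoOn θ (Set.Ici t₀) := by
    apply strictMonoOn_of_deriv_pos (convex_Ici t₀) hθcont.continuousOn
    intro x hx
    rw [interior_Ici] at hx
    rw [hderiv_eq x]
    have := hP x (le_of_lt hx)
    linarith
  have hgrow : ∀ y : ℝ, t₀ ≤ y → 1 * (y - t₀) ≤ θ y - θ t₀ := by
    intro y hy
    exact (convex_Ici t₀).mul_sub_le_image_sub_of_le_deriv hθcont.continuousOn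
      (hθdiff.differentiableOn)
      (fun x hx => by
        rw [interior_Ici] at hx
        rw [hderiv_eq x]
        exact hP x (le_of_lt hx))
      t₀ (Set.self_mem_Ici) y (Set.mem_Ici.mpr hy) hy
  have htends : Tendsto θ atTop atTop := by
    apply tendsto_atTop_mono' atTop
      (show ∀ᶠ y in atTop, θ t₀ + (y - t₀) ≤ θ y by
        filter_upwards [eventually_ge_atTop t₀] with y hy
        have := hgrow y hy
        linarith)
    have h3 : Tendsto (fun y : ℝ => y - t₀) atTop atTop :=
      tendsto_atTop_add_const_right atTop (-t₀) tendsto_id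
    exact tendsto_atTop_add_const_left atTop (θ t₀) h3
  refine ⟨t₀, hpos, hmono, htends, ?_⟩
  intro v hv
  obtain ⟨T, hT1, hT2⟩ := ((htends.eventually_ge_atTop ((v:ℝ) * Real.pi)).and
    (eventually_ge_atTop t₀)).exists
  have hmem : (v:ℝ) * Real.pi ∈ Set.Icc (θ t₀) (θ T) := ⟨le_of_lt hv, hT1⟩
  obtain ⟨t, htmem, htval⟩ := intermediate_value_Icc hT2 hθcont.continuousOn hmem
  have htgt : t₀ < t := by
    rcases lt_or_eq_of_le htmem.1 with h | h
    · exact h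
    · exfalso
      rw [← h] at htval
      linarith
  refine ⟨t, ⟨htgt, htval⟩, ?_⟩
  rintro t' ⟨ht', hval'⟩
  apply hmono.injOn (Set.mem_Ici.mpr (le_of_lt ht')) (Set.mem_Ici.mpr (le_of_lt htgt))
  rw [hval', htval]
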